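/- For every 0 < p < 1, the maximum of the function x ↦ x^{4/p-2} + (2/p - 1)² x^{4/p-4}(1 - x²) over x ∈ [0,1] equals (2/p)·(1 - p/2)^{2/p - 1}, and it is attained at x = √(1 - p/2). -/

import Mathlib

open Real Set

private lemma rpow_split (x a : ℝ) (hx : 0 < x) : x ^ a = x ^ (a - 1) * x := by
  have h := Real.rpow_add hx (a - 1) 1
  rw [Real.rpow_one] at h
  rw [← h]; congr 1; ring

private lemma amgm_aux (a u : ℝ) (ha : 1 < a) (hu0 : 0 ≤ u) (hu : 0 ≤ a - (a - 1) * u) :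
    u ^ (a - 1) * (a - (a - 1) * u) ≤ 1 := by
  have ha0 : (0:ℝ) < a := by linarith
  have h := Real.geom_mean_le_arith_mean2_weighted (w₁ := (a - 1) / a) (w₂ := 1 / a)
    (p₁ := u) (p₂ := a - (a - 1) * u) (div_nonneg (by linarith) ha0.le) (by positivity) hu0 hu
    (by field_simp; ring)
  have hrhs : (a - 1) / a * u + 1 / a * (a - (a - 1) * u) = 1 := by
    field_simp
    ring
  rw [hrhs] at h
  have h2 : (u ^ ((a - 1) / a) * (a - (a - 1) * u) ^ (1 / a)) ^ a ≤ 1 :=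
    Real.rpow_le_one (by positivity) h ha0.le
  rw [Real.mul_rpow (by positivity) (by positivity), ← Real.rpow_mul hu0,
    ← Real.rpow_mul hu, div_mul_cancel₀ _ ha0.ne', one_div, inv_mul_cancel₀ ha0.ne',
    Real.rpow_one] at h2
  exact h2

private lemma key_ineq (a : ℝ) (ha : 1 < a) {t : ℝ} (ht0 : 0 ≤ t) (ht1 : t ≤ 1) :
    t ^ a + a ^ 2 * t ^ (a - 1) * (1 - t) ≤ (a + 1) * (a / (a + 1)) ^ a := by
  have ha0 : (0:ℝ) < a := by linarith
  have ha1 : (0:ℝ) < a + 1 := by linarith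
  have hts : (0:ℝ) < a / (a + 1) := by positivity
  rcases eq_or_lt_of_le ht0 with h0 | h0
  · rw [← h0, Real.zero_rpow (by linarith), Real.zero_rpow (by linarith)]
    have : (0:ℝ) < (a + 1) * (a / (a + 1)) ^ a := by positivity
    linarith
  · set u : ℝ := t / (a / (a + 1)) with hu_def
    have hu0 : 0 < u := by positivity
    have htu : t = (a / (a + 1)) * u := by
      rw [hu_def]; field_simp
    have hub : 0 ≤ a - (a - 1) * u := by
      have hu_eq : (a - 1) * u = (a ^ 2 - 1) * t / a := by
        rw [hu_def]; field_simp; ring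
      rw [hu_eq, sub_nonneg, div_le_iff₀ ha0]
      nlinarith
    have hbound := amgm_aux a u ha hu0.le hub
    have htpow : t ^ (a - 1) = (a / (a + 1)) ^ (a - 1) * u ^ (a - 1) := by
      rw [htu, Real.mul_rpow hts.le hu0.le]
    have hX : (0:ℝ) ≤ (a / (a + 1)) ^ (a - 1) := Real.rpow_nonneg hts.le _
    calc t ^ a + a ^ 2 * t ^ (a - 1) * (1 - t)
        = (a / (a + 1)) ^ (a - 1) * (u ^ (a - 1) * (a - (a - 1) * u)) * a := by
          rw [rpow_split t a h0, htpow]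
          rw [htu]; field_simp; ring
      _ ≤ (a / (a + 1)) ^ (a - 1) * 1 * a := by gcongr
      _ = (a + 1) * (a / (a + 1)) ^ a := by
          rw [rpow_split _ a hts]; field_simp

private lemma key_eq (a : ℝ) (ha : 1 < a) :
    (a / (a + 1)) ^ a + a ^ 2 * (a / (a + 1)) ^ (a - 1) * (1 - a / (a + 1))
      = (a + 1) * (a / (a + 1)) ^ a := by
  have ha1 : (0:ℝ) < a + 1 := by linarith
  have hts : (0:ℝ) < a / (a + 1) := by positivity
  rw [rpow_split _ a hts]
  field_simp
  ring

private lemma sq_rpow (x : ℝ) (hx : 0 ≤ x) (b : ℝ) : x ^ (2 * b) = (x ^ 2) ^ b := by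
  rw [Real.rpow_mul hx]
  norm_num

theorem extremal_calculus (p : ℝ) (hp0 : 0 < p) (hp1 : p < 1) :
    (∀ x ∈ Icc (0 : ℝ) 1,
        x ^ (4 / p - 2) + (2 / p - 1) ^ 2 * x ^ (4 / p - 4) * (1 - x ^ 2)
          ≤ (2 / p) * (1 - p / 2) ^ (2 / p - 1)) ∧
      (Real.sqrt (1 - p / 2)) ^ (4 / p - 2) +
          (2 / p - 1) ^ 2 * (Real.sqrt (1 - p / 2)) ^ (4 / p - 4) *
            (1 - (Real.sqrt (1 - p / 2)) ^ 2)
        = (2 / p) * (1 - p / 2) ^ (2 / p - 1) := by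
  set a : ℝ := 2 / p - 1 with ha_def
  have ha : 1 < a := by
    rw [ha_def]
    have : 2 < 2 / p := by rw [lt_div_iff₀ hp0]; nlinarith
    linarith
  have ha1 : a + 1 = 2 / p := by rw [ha_def]; ring
  have hts_eq : a / (a + 1) = 1 - p / 2 := by
    rw [ha_def]; field_simp; ring
  have he1 : 4 / p - 2 = 2 * a := by rw [ha_def]; ring
  have he2 : 4 / p - 4 = 2 * (a - 1) := by rw [ha_def]; ring
  constructor
  · intro x hx
    obtain ⟨hx0, hx1⟩ := hx
    have ht1 : x ^ 2 ≤ 1 := by nlinarith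
    have h := key_ineq a ha (sq_nonneg x) ht1
    rw [he1, he2, sq_rpow x hx0 a, sq_rpow x hx0 (a - 1), ← hts_eq, ← ha1]
    exact h
  · have hpos : (0:ℝ) ≤ 1 - p / 2 := by linarith
    have hs2 : Real.sqrt (1 - p / 2) ^ 2 = 1 - p / 2 := Real.sq_sqrt hpos
    rw [he1, he2, sq_rpow _ (Real.sqrt_nonneg _) a, sq_rpow _ (Real.sqrt_nonneg _) (a - 1),
      hs2, ← hts_eq, ← ha1]
    exact key_eq a ha
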